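/- Let Λ ⊆ ℝ be a nonempty locally finite set symmetric under reflection in two distinct points, and let x', y' be two distinct reflection centres of Λ at minimal distance. Then per(Λ) = 2|x' − y'|·ℤ. -/

import Mathlib

open Pointwise

/-- Let `Λ ⊆ ℝ` be a nonempty locally finite set symmetric under reflection in two
distinct points, and let `x'`, `y'` be two distinct reflection centres at minimal
distance.  Then `per(Λ) = 2|x' - y'| ℤ`. -/
theorem periods_of_doubly_reflection_symmetric_set
    (Λ : Set ℝ) (hne : Λ.Nonempty)
    (hlf : ∀ K : Set ℝ, IsCompact K → (Λ ∩ K).Finite)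
    (x' y' : ℝ) (hxy : x' ≠ y')
    (hx : (fun w => 2 * x' - w) '' Λ = Λ)
    (hy : (fun w => 2 * y' - w) '' Λ = Λ)
    (hmin : ∀ u v : ℝ, (fun w => 2 * u - w) '' Λ = Λ →
      (fun w => 2 * v - w) '' Λ = Λ → u ≠ v → |x' - y'| ≤ |u - v|) :
    {t : ℝ | t +ᵥ Λ = Λ} = {t : ℝ | ∃ n : ℤ, t = n * (2 * |x' - y'|)} := by
  have hvadd : ∀ t : ℝ, t +ᵥ Λ = (fun w => t + w) '' Λ := by
    intro t; rw [← Set.image_vadd]; rfl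
  -- additive closure properties of the period set
  have hadd : ∀ a b : ℝ, a +ᵥ Λ = Λ → b +ᵥ Λ = Λ → (a + b) +ᵥ Λ = Λ := by
    intro a b ha hb
    rw [add_vadd, hb, ha]
  have hneg : ∀ a : ℝ, a +ᵥ Λ = Λ → (-a) +ᵥ Λ = Λ := by
    intro a ha
    conv_lhs => rw [← ha, ← add_vadd]
    simp
  have hint : ∀ (n : ℤ) (a : ℝ), a +ᵥ Λ = Λ → ((n : ℝ) * a) +ᵥ Λ = Λ := by
    intro n a ha
    induction n using Int.induction_on with
    | zero => simpa using (zero_vadd ℝ Λ)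
    | succ k ih =>
        have h := hadd _ _ ih ha
        rwa [show (((k : ℤ) : ℝ)) * a + a = (((k : ℤ) + 1 : ℤ) : ℝ) * a by push_cast; ring] at h
    | pred k ih =>
        have h := hadd _ _ ih (hneg a ha)
        rwa [show (((-(k : ℤ) : ℤ)) : ℝ) * a + -a = (((-(k : ℤ) - 1 : ℤ)) : ℝ) * a by push_cast; ring] at h
  -- 2(x' - y') is a period
  have h1 : (2 * (x' - y')) +ᵥ Λ = Λ := by
    have hc : (fun w : ℝ => 2 * (x' - y') + w)
        = (fun w : ℝ => 2 * x' - w) ∘ (fun w : ℝ => 2 * y' - w) := by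
      funext w
      simp only [Function.comp_apply]
      ring
    rw [hvadd, hc, Set.image_comp, hy, hx]
  have h2 : (2 * |x' - y'|) +ᵥ Λ = Λ := by
    rcases abs_cases (x' - y') with ⟨h, _⟩ | ⟨h, _⟩
    · rw [h]; exact h1
    · rw [h]
      have := hneg _ h1
      rwa [show -(2 * (x' - y')) = 2 * -(x' - y') by ring] at this
  set d : ℝ := 2 * |x' - y'| with hd
  have hd0 : 0 < d := by
    have : x' - y' ≠ 0 := sub_ne_zero.mpr hxy
    have := abs_pos.mpr this
    positivity
  -- every nonzero period is at least d in absolute value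
  have hbig : ∀ t : ℝ, t +ᵥ Λ = Λ → t ≠ 0 → d ≤ |t| := by
    intro t ht ht0
    have hu : (fun w => 2 * (x' + t / 2) - w) '' Λ = Λ := by
      have hc : (fun w : ℝ => 2 * (x' + t / 2) - w)
          = (fun w : ℝ => t + w) ∘ (fun w : ℝ => 2 * x' - w) := by
        funext w
        simp only [Function.comp_apply]
        ring
      rw [hc, Set.image_comp, hx, ← hvadd, ht]
    have hne' : x' ≠ x' + t / 2 := by
      intro h
      apply ht0
      have : t / 2 = 0 := by linarith [h]
      linarith
    have := hmin x' (x' + t / 2) hx hu hne'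
    have habs : |x' - (x' + t / 2)| = |t| / 2 := by
      rw [show x' - (x' + t / 2) = -(t / 2) by ring, abs_neg, abs_div]
      norm_num
    rw [habs] at this
    rw [hd]
    linarith
  ext t
  simp only [Set.mem_setOf_eq]
  constructor
  · intro ht
    refine ⟨⌊t / d⌋, ?_⟩
    set n : ℤ := ⌊t / d⌋ with hn
    have hnd : ((n : ℝ) * d) +ᵥ Λ = Λ := hint n d h2
    have hr : (t - n * d) +ᵥ Λ = Λ := by
      have := hadd _ _ ht (hneg _ hnd)
      rwa [show t + -((n : ℝ) * d) = t - n * d by ring] at this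
    have hfl : (n : ℝ) ≤ t / d := Int.floor_le _
    have hfu : t / d < n + 1 := Int.lt_floor_add_one _
    have h0 : 0 ≤ t - n * d := by
      have : (n : ℝ) * d ≤ t := by
        rw [← le_div_iff₀ hd0] at *
        linarith [hfl]
      linarith
    have h1' : t - n * d < d := by
      have : t < ((n : ℝ) + 1) * d := by
        have := (div_lt_iff₀ hd0).mp hfu
        linarith
      nlinarith
    by_contra hne2
    have htn : t - n * d ≠ 0 := fun h => hne2 (by linarith [sub_eq_zero.mp h])
    have := hbig _ hr htn
    rw [abs_of_nonneg h0] at this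
    linarith
  · rintro ⟨n, rfl⟩
    exact hint n d h2
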